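/- (Lemma 1, arctan telescoping.) Let n ≥ 1 and let f : ℕ → ℝ be such that 1 + f(k+1)·f(k) ≠ 0 for all 1 ≤ k ≤ n. Define h(k) = (f(k+1) − f(k)) / (1 + f(k+1)·f(k)). Then ∑_{k=1}^{n} arctan(h(k)) = arctan(f(n+1)) − arctan(f(1)) + π · ∑_{k} sgn(f(k)), where the last sum is over all 1 ≤ k ≤ n with f(k+1)·f(k) < −1, and sgn(x) equals 1 for x > 0, 0 for x = 0, and −1 for x < 0. -/
import Mathlib

open Real Finset

lemma arctan_key (x y : ℝ) (hxy : 1 + x * y ≠ 0) :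
    Real.arctan ((x - y) / (1 + x * y)) =
      Real.arctan x - Real.arctan y + (if x * y < -1 then π * Real.sign y else 0) := by
  have hdiv : (x + -y) / (1 - x * -y) = (x - y) / (1 + x * y) := by ring_nf
  rcases lt_trichotomy (x * y) (-1) with hlt | heq | hgt
  · have h1 : 1 < x * -y := by nlinarith
    have hx0 : x ≠ 0 := by intro h; rw [h] at hlt; norm_num at hlt
    rcases hx0.lt_or_gt with hx | hx
    · -- x < 0, so y > 0, sign y = 1
      have hy : 0 < y := by nlinarith
      have k := Real.arctan_add_eq_sub_pi h1 hx
      rw [Real.arctan_neg, hdiv] at k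
      rw [if_pos hlt, Real.sign_of_pos hy]
      linarith
    · -- x > 0, y < 0, sign y = -1
      have hy : y < 0 := by nlinarith
      have k := Real.arctan_add_eq_add_pi h1 hx
      rw [Real.arctan_neg, hdiv] at k
      rw [if_pos hlt, Real.sign_of_neg hy]
      linarith
  · exact absurd (by linarith) hxy
  · have h1 : x * -y < 1 := by nlinarith
    have k := Real.arctan_add h1
    rw [Real.arctan_neg, hdiv] at k
    rw [if_neg (not_lt.mpr hgt.le)]
    linarith

/-- **Lemma 1 (arctan telescoping).** If `1 + f(k+1) f(k) ≠ 0` for `1 ≤ k ≤ n` and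
`h(k) = (f(k+1) - f(k)) / (1 + f(k+1) f(k))`, then
`∑_{k=1}^n arctan (h k) = arctan (f (n+1)) - arctan (f 1) + π ∑ sgn (f k)`,
the last sum being over those `1 ≤ k ≤ n` with `f(k+1) f(k) < -1`. -/
theorem arctan_telescoping (n : ℕ) (hn : 1 ≤ n) (f : ℕ → ℝ)
    (hf : ∀ k, 1 ≤ k → k ≤ n → 1 + f (k + 1) * f k ≠ 0)
    (h : ℕ → ℝ) (hh : ∀ k, h k = (f (k + 1) - f k) / (1 + f (k + 1) * f k)) :
    ∑ k ∈ Finset.Icc 1 n, Real.arctan (h k) =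
      Real.arctan (f (n + 1)) - Real.arctan (f 1) +
        π * ∑ k ∈ (Finset.Icc 1 n).filter (fun k => f (k + 1) * f k < -1), Real.sign (f k) := by
  have step : ∀ k ∈ Finset.Icc 1 n, Real.arctan (h k) =
      (Real.arctan (f (k + 1)) - Real.arctan (f k)) +
        (if f (k + 1) * f k < -1 then π * Real.sign (f k) else 0) := by
    intro k hk
    rw [Finset.mem_Icc] at hk
    rw [hh k, arctan_key _ _ (hf k hk.1 hk.2)]
  rw [Finset.sum_congr rfl step, Finset.sum_add_distrib]
  congr 1
  · have : ∀ m : ℕ, 1 ≤ m → ∑ k ∈ Finset.Icc 1 m,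
        (Real.arctan (f (k + 1)) - Real.arctan (f k)) =
        Real.arctan (f (m + 1)) - Real.arctan (f 1) := by
      intro m hm
      induction m with
      | zero => omega
      | succ p ih =>
        rcases Nat.eq_or_lt_of_le hm with h1 | h1
        · simp [← h1]
        · rw [Finset.sum_Icc_succ_top (by omega), ih (by omega)]
          ring
    exact this n hn
  · rw [Finset.mul_sum, Finset.sum_filter]
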